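/- Suppose the set [ν] is partitioned into s blocks. Independently colour each element yellow with probability c and, independently, blue with probability c. Then the probability that no block is bicoloured is at most [(1-c)^{ν/s}·(2-(1-c)^{ν/s})]^s. -/

import Mathlib

open scoped Classical

/-- Probability weight of a subset `S` under a Bernoulli(c) process on `Fin ν`. -/
noncomputable def bernWeight (ν : ℕ) (c : ℝ) (S : Finset (Fin ν)) : ℝ :=
  c ^ S.card * (1 - c) ^ (ν - S.card)

namespace NoBlockAux

noncomputable def wt (c : ℝ) (b : Bool) : ℝ := if b = true then c else 1 - c

lemma bernWeight_eq_prod (ν : ℕ) (c : ℝ) (S : Finset (Fin ν)) :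
    bernWeight ν c S = ∏ i : Fin ν, (if i ∈ S then c else 1 - c) := by
  rw [Finset.prod_ite, Finset.prod_const, Finset.prod_const]
  have h1 : Finset.filter (fun i => i ∈ S) Finset.univ = S := by
    ext x; simp
  have h2 : (Finset.filter (fun i => ¬ i ∈ S) Finset.univ) = Sᶜ := by
    ext x; simp
  rw [h1, h2, Finset.card_compl]
  simp [bernWeight]

variable {α : Type*} [Fintype α] [DecidableEq α]

lemma sum_W (c : ℝ) : ∑ h : α → Bool, ∏ i, wt c (h i) = 1 := by
  classical
  calc ∑ h : α → Bool, ∏ i, wt c (h i)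
      = ∑ h ∈ Fintype.piFinset (fun _ : α => (Finset.univ : Finset Bool)),
          ∏ i, wt c (h i) := by rw [Fintype.piFinset_univ]
    _ = ∏ i : α, ∑ b : Bool, wt c b := (Finset.prod_univ_sum _ _).symm
    _ = 1 := by simp [wt]

lemma sum_W_zero (c : ℝ) :
    ∑ h : α → Bool, (if (∀ i, h i = false) then (1:ℝ) else 0) * ∏ i, wt c (h i)
      = (1 - c) ^ (Fintype.card α) := by
  classical
  have hiff : ∀ h : α → Bool, (∀ i, h i = false) ↔ h = fun _ => false := by
    intro h; simp [funext_iff]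
  simp only [hiff, ite_mul, one_mul, zero_mul]
  rw [Finset.sum_ite_eq' Finset.univ (fun _ => false) (fun h => ∏ i, wt c (h i))]
  simp [wt]

lemma block_sum (c : ℝ) :
    ∑ p : (α → Bool) × (α → Bool),
      (if ((∀ i, p.1 i = false) ∨ (∀ i, p.2 i = false)) then (1:ℝ) else 0) *
        ((∏ i, wt c (p.1 i)) * (∏ i, wt c (p.2 i)))
      = (1 - c) ^ (Fintype.card α) * (2 - (1 - c) ^ (Fintype.card α)) := by
  classical
  set n := Fintype.card α with hn
  set Wf : (α → Bool) → ℝ := fun h => ∏ i, wt c (h i) with hWf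
  set Af : (α → Bool) → ℝ := fun h => if (∀ i, h i = false) then (1:ℝ) else 0 with hAf
  have e1 : ∑ h : α → Bool, Af h * Wf h = (1 - c) ^ n := sum_W_zero c
  have e2 : ∑ h : α → Bool, Wf h = 1 := sum_W c
  calc ∑ p : (α → Bool) × (α → Bool),
      (if ((∀ i, p.1 i = false) ∨ (∀ i, p.2 i = false)) then (1:ℝ) else 0) *
        ((∏ i, wt c (p.1 i)) * (∏ i, wt c (p.2 i)))
      = ∑ h : α → Bool, ∑ h' : α → Bool,
          (Af h * Wf h * Wf h' + Wf h * (Af h' * Wf h') - (Af h * Wf h) * (Af h' * Wf h')) := by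
        rw [Fintype.sum_prod_type]
        refine Finset.sum_congr rfl fun h _ => Finset.sum_congr rfl fun h' _ => ?_
        by_cases h1 : ∀ i, h i = false <;> by_cases h2 : ∀ i, h' i = false <;>
          simp [Af, Wf, h1, h2] <;> ring
    _ = ∑ h : α → Bool,
          ((Af h * Wf h) * (∑ h' : α → Bool, Wf h') + Wf h * (∑ h' : α → Bool, Af h' * Wf h')
            - (Af h * Wf h) * (∑ h' : α → Bool, Af h' * Wf h')) := by
        refine Finset.sum_congr rfl fun h _ => ?_
        rw [Finset.sum_sub_distrib, Finset.sum_add_distrib, ← Finset.mul_sum, ← Finset.mul_sum,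
          ← Finset.mul_sum]
    _ = ∑ h : α → Bool, ((Af h * Wf h) * 1 + Wf h * ((1-c)^n) - (Af h * Wf h) * ((1-c)^n)) := by
        rw [e1, e2]
    _ = (∑ h : α → Bool, Af h * Wf h) * 1 + (∑ h : α → Bool, Wf h) * ((1-c)^n)
          - (∑ h : α → Bool, Af h * Wf h) * ((1-c)^n) := by
        rw [Finset.sum_sub_distrib, Finset.sum_add_distrib, ← Finset.sum_mul, ← Finset.sum_mul,
          ← Finset.sum_mul]
    _ = (1 - c) ^ n * (2 - (1 - c) ^ n) := by rw [e1, e2]; ring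

lemma ite_forall_prod {κ : Type*} [Fintype κ] (C : κ → Prop) [DecidablePred C]
    [Decidable (∀ j, C j)] :
    (if (∀ j, C j) then (1:ℝ) else 0) = ∏ j, if C j then (1:ℝ) else 0 := by
  by_cases h : ∀ j, C j
  · rw [if_pos h]
    exact (Finset.prod_eq_one fun j _ => by rw [if_pos (h j)]).symm
  · rw [if_neg h]
    push_neg at h
    obtain ⟨j, hj⟩ := h
    exact (Finset.prod_eq_zero (Finset.mem_univ j) (by rw [if_neg hj])).symm

lemma sum_pi_prod {κ : Type*} [Fintype κ] [DecidableEq κ] {δ : κ → Type*}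
    [∀ j, Fintype (δ j)] (f : ∀ j, δ j → ℝ) :
    ∑ F : ∀ j, δ j, ∏ j, f j (F j) = ∏ j, ∑ p : δ j, f j p := by
  rw [← Fintype.piFinset_univ, ← Finset.prod_univ_sum]

end NoBlockAux

open NoBlockAux

set_option maxHeartbeats 1000000 in
/-- If `[ν]` is partitioned into `s` blocks and elements are independently
coloured yellow (resp. blue) with probability `c`, then the probability that
no block is bicoloured is at most `[(1-c)^{ν/s}·(2-(1-c)^{ν/s})]^s`. -/
theorem no_block_bicoloured (ν s : ℕ) (hs : 0 < s) (blk : Fin ν → Fin s)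
    (hsurj : Function.Surjective blk)
    (c : ℝ) (hc0 : 0 ≤ c) (hc1 : c ≤ 1) :
    ∑ Y ∈ (Finset.univ : Finset (Fin ν)).powerset,
      ∑ B ∈ (Finset.univ : Finset (Fin ν)).powerset,
        (if ¬ ∃ j : Fin s, (∃ y ∈ Y, blk y = j) ∧ (∃ b ∈ B, blk b = j)
          then bernWeight ν c Y * bernWeight ν c B else 0)
      ≤ ((1 - c) ^ ((ν : ℝ) / (s : ℝ)) * (2 - (1 - c) ^ ((ν : ℝ) / (s : ℝ)))) ^ s := by
  classical
  have hsne : (s : ℝ) ≠ 0 := Nat.cast_ne_zero.mpr hs.ne'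
  set q : ℝ := 1 - c with hqdef
  have hq0 : 0 ≤ q := by simp only [hqdef]; linarith
  have hq1 : q ≤ 1 := by simp only [hqdef]; linarith
  set n : Fin s → ℕ := fun j => Fintype.card {i // blk i = j} with hndef
  have hsum : ∑ j, n j = ν := by
    rw [hndef, ← Fintype.card_sigma]
    simpa using Fintype.card_congr (Equiv.sigmaFiberEquiv blk)
  set Gt : ∀ j : Fin s, ({i // blk i = j} → Bool) × ({i // blk i = j} → Bool) → ℝ :=
    fun j p => (if ((∀ i, p.1 i = false) ∨ (∀ i, p.2 i = false)) then (1:ℝ) else 0) *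
      ((∏ i, wt c (p.1 i)) * (∏ i, wt c (p.2 i))) with hGt
  set g : Finset (Fin ν) × Finset (Fin ν) → ℝ := fun p =>
    if ¬ ∃ j : Fin s, (∃ y ∈ p.1, blk y = j) ∧ (∃ b ∈ p.2, blk b = j)
      then bernWeight ν c p.1 * bernWeight ν c p.2 else 0 with hg
  set Φ : (∀ j : Fin s, ({i // blk i = j} → Bool) × ({i // blk i = j} → Bool)) →
      Finset (Fin ν) × Finset (Fin ν) :=
    fun F => (Finset.univ.filter (fun i => (F (blk i)).1 ⟨i, rfl⟩ = true),
              Finset.univ.filter (fun i => (F (blk i)).2 ⟨i, rfl⟩ = true)) with hΦdef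
  have hΦ : Function.Bijective Φ := by
    rw [Function.bijective_iff_has_inverse]
    refine ⟨fun p j => (fun i => decide (i.1 ∈ p.1), fun i => decide (i.1 ∈ p.2)), ?_, ?_⟩
    · intro F
      funext j
      refine Prod.ext ?_ ?_ <;> funext i <;> rcases i with ⟨x, hx⟩ <;> subst hx <;>
        simp [hΦdef]
    · rintro ⟨Y, B⟩
      refine Prod.ext ?_ ?_ <;> ext x <;> simp [hΦdef]
  have hcomp : ∀ F, (∏ j, Gt j (F j)) = g (Φ F) := by
    intro F
    set f1 : Fin ν → Bool := fun i => (F (blk i)).1 ⟨i, rfl⟩ with hf1def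
    set f2 : Fin ν → Bool := fun i => (F (blk i)).2 ⟨i, rfl⟩ with hf2def
    have hf1 : ∀ (j) (i : {i // blk i = j}), f1 i.1 = (F j).1 i := by
      rintro j ⟨x, rfl⟩; rfl
    have hf2 : ∀ (j) (i : {i // blk i = j}), f2 i.1 = (F j).2 i := by
      rintro j ⟨x, rfl⟩; rfl
    have hY : (Φ F).1 = Finset.univ.filter (fun i => f1 i = true) := rfl
    have hB : (Φ F).2 = Finset.univ.filter (fun i => f2 i = true) := rfl
    have hw1 : bernWeight ν c (Φ F).1 = ∏ j, ∏ i : {i // blk i = j}, wt c ((F j).1 i) := by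
      rw [hY, bernWeight_eq_prod]
      have h1 : ∏ i : Fin ν, (if i ∈ Finset.univ.filter (fun i => f1 i = true) then c else 1 - c)
          = ∏ i : Fin ν, wt c (f1 i) := by
        refine Finset.prod_congr rfl fun i _ => ?_
        simp [wt, Finset.mem_filter]
      rw [h1, ← Fintype.prod_fiberwise blk (fun i => wt c (f1 i))]
      exact Finset.prod_congr rfl fun j _ => Finset.prod_congr rfl fun i _ => by rw [hf1 j i]
    have hw2 : bernWeight ν c (Φ F).2 = ∏ j, ∏ i : {i // blk i = j}, wt c ((F j).2 i) := by
      rw [hB, bernWeight_eq_prod]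
      have h1 : ∏ i : Fin ν, (if i ∈ Finset.univ.filter (fun i => f2 i = true) then c else 1 - c)
          = ∏ i : Fin ν, wt c (f2 i) := by
        refine Finset.prod_congr rfl fun i _ => ?_
        simp [wt, Finset.mem_filter]
      rw [h1, ← Fintype.prod_fiberwise blk (fun i => wt c (f2 i))]
      exact Finset.prod_congr rfl fun j _ => Finset.prod_congr rfl fun i _ => by rw [hf2 j i]
    have hmem1 : ∀ j : Fin s, (∃ y ∈ (Φ F).1, blk y = j) ↔
        ∃ i : {i // blk i = j}, (F j).1 i = true := by
      intro j
      constructor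
      · rintro ⟨y, hy, rfl⟩
        refine ⟨⟨y, rfl⟩, ?_⟩
        rw [← hf1 _ ⟨y, rfl⟩]
        simpa [hY, Finset.mem_filter] using hy
      · rintro ⟨⟨x, rfl⟩, hval⟩
        refine ⟨x, ?_, rfl⟩
        rw [hY, Finset.mem_filter]
        exact ⟨Finset.mem_univ x, by rw [hf1 _ ⟨x, rfl⟩]; exact hval⟩
    have hmem2 : ∀ j : Fin s, (∃ b ∈ (Φ F).2, blk b = j) ↔
        ∃ i : {i // blk i = j}, (F j).2 i = true := by
      intro j
      constructor
      · rintro ⟨y, hy, rfl⟩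
        refine ⟨⟨y, rfl⟩, ?_⟩
        rw [← hf2 _ ⟨y, rfl⟩]
        simpa [hB, Finset.mem_filter] using hy
      · rintro ⟨⟨x, rfl⟩, hval⟩
        refine ⟨x, ?_, rfl⟩
        rw [hB, Finset.mem_filter]
        exact ⟨Finset.mem_univ x, by rw [hf2 _ ⟨x, rfl⟩]; exact hval⟩
    have hcond : (¬ ∃ j : Fin s, (∃ y ∈ (Φ F).1, blk y = j) ∧ (∃ b ∈ (Φ F).2, blk b = j))
        ↔ ∀ j : Fin s, ((∀ i, (F j).1 i = false) ∨ (∀ i, (F j).2 i = false)) := by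
      constructor
      · intro h j
        by_contra hcon
        push_neg at hcon
        obtain ⟨h1, h2⟩ := hcon
        apply h
        refine ⟨j, ?_, ?_⟩
        · obtain ⟨i, hi⟩ := h1
          exact (hmem1 j).mpr ⟨i, by simpa using hi⟩
        · obtain ⟨i, hi⟩ := h2
          exact (hmem2 j).mpr ⟨i, by simpa using hi⟩
      · rintro h ⟨j, hA, hB'⟩
        obtain ⟨i, hi⟩ := (hmem1 j).mp hA
        obtain ⟨i', hi'⟩ := (hmem2 j).mp hB'
        rcases h j with h' | h'
        · rw [h' i] at hi; simp at hi
        · rw [h' i'] at hi'; simp at hi'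
    have hgF : g (Φ F) = if (∀ j : Fin s, ((∀ i, (F j).1 i = false) ∨ (∀ i, (F j).2 i = false)))
        then bernWeight ν c (Φ F).1 * bernWeight ν c (Φ F).2 else 0 := by
      rw [hg]
      exact if_congr hcond rfl rfl
    rw [hgF]
    have hsplit : (if (∀ j : Fin s, ((∀ i, (F j).1 i = false) ∨ (∀ i, (F j).2 i = false)))
        then bernWeight ν c (Φ F).1 * bernWeight ν c (Φ F).2 else 0)
        = (if (∀ j : Fin s, ((∀ i, (F j).1 i = false) ∨ (∀ i, (F j).2 i = false)))
            then (1:ℝ) else 0) * (bernWeight ν c (Φ F).1 * bernWeight ν c (Φ F).2) := by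
      by_cases h : ∀ j : Fin s, ((∀ i, (F j).1 i = false) ∨ (∀ i, (F j).2 i = false)) <;>
        simp [h]
    rw [hsplit, ite_forall_prod, hw1, hw2, ← Finset.prod_mul_distrib,
      ← Finset.prod_mul_distrib]
  have key : (∑ Y ∈ (Finset.univ : Finset (Fin ν)).powerset,
      ∑ B ∈ (Finset.univ : Finset (Fin ν)).powerset,
        (if ¬ ∃ j : Fin s, (∃ y ∈ Y, blk y = j) ∧ (∃ b ∈ B, blk b = j)
          then bernWeight ν c Y * bernWeight ν c B else 0))
      = ∏ j, (q ^ n j * (2 - q ^ n j)) := by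
    rw [Finset.powerset_univ]
    calc (∑ Y : Finset (Fin ν), ∑ B : Finset (Fin ν),
        (if ¬ ∃ j : Fin s, (∃ y ∈ Y, blk y = j) ∧ (∃ b ∈ B, blk b = j)
          then bernWeight ν c Y * bernWeight ν c B else 0))
        = ∑ p : Finset (Fin ν) × Finset (Fin ν), g p := (Fintype.sum_prod_type g).symm
      _ = ∑ F : ∀ j : Fin s, ({i // blk i = j} → Bool) × ({i // blk i = j} → Bool),
            ∏ j, Gt j (F j) := (Fintype.sum_bijective Φ hΦ _ g hcomp).symm
      _ = ∏ j, ∑ p : ({i // blk i = j} → Bool) × ({i // blk i = j} → Bool), Gt j p :=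
          sum_pi_prod Gt
      _ = ∏ j, (q ^ n j * (2 - q ^ n j)) := by
          refine Finset.prod_congr rfl fun j _ => ?_
          simp only [hGt, hqdef, hndef]
          exact block_sum c
  rw [key]
  -- Step B : AM-GM bound
  set a : Fin s → ℝ := fun j => q ^ n j with hadef
  have ha0 : ∀ j, 0 ≤ a j := fun j => pow_nonneg hq0 _
  have ha1 : ∀ j, a j ≤ 1 := fun j => pow_le_one₀ hq0 hq1
  set G : ℝ := q ^ ((ν : ℝ) / (s : ℝ)) with hGdef2
  have hGdef : G = ((q ^ ν : ℝ)) ^ ((1:ℝ)/(s:ℝ)) := by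
    rw [hGdef2, ← Real.rpow_natCast q ν, ← Real.rpow_mul hq0, mul_one_div]
  have hG0 : 0 ≤ G := Real.rpow_nonneg hq0 _
  have hprod_a : ∏ j, a j = q ^ ν := by
    rw [hadef, Finset.prod_pow_eq_pow_sum, hsum]
  have hGs : G ^ s = q ^ ν := by
    rw [hGdef, ← Real.rpow_natCast (((q ^ ν : ℝ)) ^ ((1:ℝ)/(s:ℝ))) s,
      ← Real.rpow_mul (pow_nonneg hq0 ν), one_div, inv_mul_cancel₀ hsne, Real.rpow_one]
  have hw_sum : ∑ _j : Fin s, (1:ℝ)/(s:ℝ) = 1 := by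
    rw [Finset.sum_const, Finset.card_univ, Fintype.card_fin, nsmul_eq_mul, mul_one_div,
      div_self hsne]
  have hAM1 : ∏ j, (a j) ^ ((1:ℝ)/(s:ℝ)) ≤ ∑ j, (1/(s:ℝ)) * a j :=
    Real.geom_mean_le_arith_mean_weighted _ _ _ (fun i _ => by positivity) hw_sum
      (fun i _ => ha0 i)
  have hgm_a : ∏ j, (a j) ^ ((1:ℝ)/(s:ℝ)) = G := by
    rw [Real.finset_prod_rpow _ _ (fun j _ => ha0 j), hprod_a, hGdef]
  have h2a : ∀ j, (0:ℝ) ≤ 2 - a j := fun j => by have := ha1 j; linarith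
  have hAM2 : ∏ j, (2 - a j) ^ ((1:ℝ)/(s:ℝ)) ≤ ∑ j, (1/(s:ℝ)) * (2 - a j) :=
    Real.geom_mean_le_arith_mean_weighted _ _ _ (fun i _ => by positivity) hw_sum
      (fun i _ => h2a i)
  have hsum2 : ∑ j, (1/(s:ℝ)) * (2 - a j) = 2 - ∑ j, (1/(s:ℝ)) * a j := by
    simp only [mul_sub, Finset.sum_sub_distrib, ← Finset.sum_mul]
    rw [hw_sum]; ring
  have hchain : ∏ j, (2 - a j) ^ ((1:ℝ)/(s:ℝ)) ≤ 2 - G := by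
    calc ∏ j, (2 - a j) ^ ((1:ℝ)/(s:ℝ)) ≤ ∑ j, (1/(s:ℝ)) * (2 - a j) := hAM2
      _ = 2 - ∑ j, (1/(s:ℝ)) * a j := hsum2
      _ ≤ 2 - G := by have := hgm_a ▸ hAM1; linarith
  have hprod2 : ∏ j, (2 - a j) = (∏ j, (2 - a j) ^ ((1:ℝ)/(s:ℝ))) ^ s := by
    rw [Real.finset_prod_rpow _ _ (fun j _ => h2a j),
      ← Real.rpow_natCast ((∏ j, (2 - a j)) ^ ((1:ℝ)/(s:ℝ))) s,
      ← Real.rpow_mul (Finset.prod_nonneg (fun j _ => h2a j)), one_div,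
      inv_mul_cancel₀ hsne, Real.rpow_one]
  have hfinal2 : ∏ j, (2 - a j) ≤ (2 - G) ^ s := by
    rw [hprod2]
    exact pow_le_pow_left₀ (Finset.prod_nonneg fun j _ => Real.rpow_nonneg (h2a j) _)
      hchain s
  calc ∏ j, (q ^ n j * (2 - q ^ n j)) = (∏ j, a j) * ∏ j, (2 - a j) := by
        rw [← Finset.prod_mul_distrib]
    _ ≤ (∏ j, a j) * (2 - G) ^ s := by
        exact mul_le_mul_of_nonneg_left hfinal2 (Finset.prod_nonneg fun j _ => ha0 j)
    _ = G ^ s * (2 - G) ^ s := by rw [hprod_a, hGs]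
    _ = (G * (2 - G)) ^ s := (mul_pow _ _ _).symm
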